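/- Let a > 0 and let H : [0, ∞) → ℝ be differentiable with H(0) < -a and H'(s) ≤ a² - H(s)² for all s ≥ 0. Then H(s) < -a for all s ≥ 0, and moreover no such H exists; i.e., the hypotheses lead to a contradiction. -/
import Mathlib


/-- For a > 0, there is no differentiable H : [0,∞) → ℝ with
H(0) < -a and H'(s) ≤ a² - H(s)² for all s ≥ 0. -/
theorem no_riccati_comparison_solution (a : ℝ) (ha : 0 < a) (H : ℝ → ℝ)
    (hdiff : ∀ s, 0 ≤ s → DifferentiableAt ℝ H s)
    (h0 : H 0 < -a)
    (hder : ∀ s, 0 ≤ s → deriv H s ≤ a ^ 2 - (H s) ^ 2) :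
    False := by
  -- Step 1: H s < -a for all s ≥ 0
  have key : ∀ s, 0 ≤ s → H s < -a := by
    by_contra hc
    push_neg at hc
    obtain ⟨b₀, hb₀, hHb₀⟩ := hc
    set S : Set ℝ := {s : ℝ | 0 ≤ s ∧ -a ≤ H s} with hS
    have hSne : S.Nonempty := ⟨b₀, hb₀, hHb₀⟩
    have hSbdd : BddBelow S := ⟨0, fun x hx => hx.1⟩
    set b := sInf S with hb
    have hb0 : 0 ≤ b := le_csInf hSne fun x hx => hx.1
    have hbefore : ∀ s, 0 ≤ s → s < b → H s < -a := by
      intro s hs hsb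
      by_contra hcon
      push_neg at hcon
      exact absurd (csInf_le hSbdd ⟨hs, hcon⟩) (not_le.mpr hsb)
    -- H b ≥ -a via closure
    have hbcl : b ∈ closure S := csInf_mem_closure hSne hSbdd
    have hnb : (nhdsWithin b S).NeBot := mem_closure_iff_nhdsWithin_neBot.mp hbcl
    have hHb : -a ≤ H b := by
      have hct : ContinuousWithinAt H S b := ((hdiff b hb0).continuousAt).continuousWithinAt
      exact ge_of_tendsto hct (eventually_nhdsWithin_of_forall fun x hx => hx.2)
    have hbpos : 0 < b := by
      rcases lt_or_eq_of_le hb0 with h | h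
      · exact h
      · exact absurd hHb (not_le.mpr (h ▸ h0))
    -- H strictly decreasing on [0,b]
    have hanti : StrictAntiOn H (Set.Icc 0 b) := by
      apply strictAntiOn_of_deriv_neg (convex_Icc 0 b)
      · intro x hx
        exact ((hdiff x hx.1).continuousAt).continuousWithinAt
      · intro x hx
        rw [interior_Icc] at hx
        have hx0 : 0 ≤ x := le_of_lt hx.1
        have hlt : H x < -a := hbefore x hx0 hx.2
        have : a ^ 2 - (H x) ^ 2 < 0 := by nlinarith
        exact lt_of_le_of_lt (hder x hx0) this
    have : H b < H 0 := hanti ⟨le_refl 0, hb0⟩ ⟨hb0, le_refl b⟩ hbpos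
    linarith
  -- Step 2: G = (H + a)⁻¹ satisfies G' ≥ 1, G < 0, contradiction
  set G : ℝ → ℝ := fun s => (H s + a)⁻¹ with hG
  have hHne : ∀ s, 0 ≤ s → H s + a < 0 := fun s hs => by linarith [key s hs]
  have hGneg : ∀ s, 0 ≤ s → G s < 0 := fun s hs => inv_neg''.mpr (hHne s hs)
  have hGder : ∀ s, 0 ≤ s → HasDerivAt G (-(deriv H s) / (H s + a) ^ 2) s := by
    intro s hs
    have hH : HasDerivAt (fun x => H x + a) (deriv H s) s :=
      ((hdiff s hs).hasDerivAt).add_const a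
    exact hH.inv (ne_of_lt (hHne s hs))
  -- F = G - id is monotone on [0,∞)
  set F : ℝ → ℝ := fun s => G s - s with hF
  have hFder : ∀ s, 0 ≤ s → HasDerivAt F (-(deriv H s) / (H s + a) ^ 2 - 1) s := by
    intro s hs
    exact (hGder s hs).sub (hasDerivAt_id s)
  have hFmono : MonotoneOn F (Set.Ici 0) := by
    apply monotoneOn_of_deriv_nonneg (convex_Ici 0)
    · intro x hx
      exact ((hFder x hx).differentiableAt).continuousAt.continuousWithinAt
    · intro x hx
      rw [interior_Ici] at hx
      exact ((hFder x (le_of_lt hx)).differentiableAt).differentiableWithinAt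
    · intro x hx
      rw [interior_Ici] at hx
      have hx0 : 0 ≤ x := le_of_lt hx
      rw [(hFder x hx0).deriv]
      have hp : H x + a < 0 := hHne x hx0
      have hp2 : (0:ℝ) < (H x + a) ^ 2 := pow_two_pos_of_ne_zero (ne_of_lt hp)
      have hd := hder x hx0
      have hkey : (H x + a) ^ 2 ≤ -(deriv H x) := by nlinarith
      have : 1 ≤ -(deriv H x) / (H x + a) ^ 2 := (le_div_iff₀ hp2).mpr (by linarith)
      linarith
  -- contradiction: G(s) ≥ G(0) + s but G < 0
  set s₀ : ℝ := 1 - G 0 with hs₀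
  have hG0 : G 0 < 0 := hGneg 0 le_rfl
  have hs₀pos : 0 ≤ s₀ := by simp only [hs₀]; linarith
  have := hFmono (Set.mem_Ici.mpr le_rfl) (Set.mem_Ici.mpr hs₀pos) hs₀pos
  have hGs : G s₀ < 0 := hGneg s₀ hs₀pos
  simp only [hF, hs₀] at this
  linarith
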